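/- arXiv:1611.00817 — 2 statements merged into one kernel-verified Lean document; each statement's English description precedes it below -/
import Mathlib

section
/- Let (X,Y) be a centred bivariate Gaussian vector with Var(X) = Var(Y) = κ₀ and Cov(X,Y) = κ₁, where 0 ≤ κ₁ < κ₀. Then for the logistic sigmoid σ, E[σ(X)σ(Y)] ≤ ((κ₀+κ₁)/(κ₀-κ₁))^{1/2} · E[σ(Z)]², where Z ~ N(0, κ₀). -/
open MeasureTheory Real

set_option maxHeartbeats 1000000

private lemma sigmoid_half_integral (σ : ℝ → ℝ) (hσ : ∀ x, σ x = (1 + Real.exp (-x))⁻¹)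
    (v : ℝ) (hv : 0 < v) :
    ∫ z : ℝ, σ z * ((Real.sqrt (2 * π * v))⁻¹ * Real.exp (-(z ^ 2 / (2 * v)))) = 1/2 := by
  set g : ℝ → ℝ := fun z => (Real.sqrt (2 * π * v))⁻¹ * Real.exp (-(z ^ 2 / (2 * v))) with hg
  have hb : 0 < (2*v)⁻¹ := by positivity
  have hexp : ∀ z : ℝ, Real.exp (-(z ^ 2 / (2 * v))) = Real.exp (-(2*v)⁻¹ * z ^ 2) := by
    intro z; congr 1; field_simp
  have hgint : Integrable g := by
    simp only [hg, hexp]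
    exact (integrable_exp_neg_mul_sq hb).const_mul _
  have hσcont : Continuous σ := by
    have : Continuous fun x : ℝ => (1 + Real.exp (-x))⁻¹ := by
      apply Continuous.inv₀ (by continuity)
      intro x; positivity
    simpa [funext hσ] using this
  have hσ01 : ∀ x, 0 ≤ σ x ∧ σ x ≤ 1 := by
    intro x
    rw [hσ]
    constructor
    · positivity
    · rw [inv_le_one_iff₀]; right; nlinarith [Real.exp_pos (-x)]
  have hgcont : Continuous g := by
    exact continuous_const.mul (by continuity)
  have hmono : ∀ (h : ℝ → ℝ), Continuous h → (∀ x, 0 ≤ h x ∧ h x ≤ 1) →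
      Integrable (fun z => h z * g z) := by
    intro h hc h01
    apply hgint.mono ((hc.mul hgcont).aestronglyMeasurable)
    filter_upwards with z
    have hg0 : 0 ≤ g z := by rw [hg]; positivity
    rw [Real.norm_eq_abs, Real.norm_eq_abs, abs_of_nonneg hg0, Pi.mul_apply,
      abs_of_nonneg (mul_nonneg (h01 z).1 hg0)]
    nlinarith [(h01 z).1, (h01 z).2]
  have hint1 : Integrable (fun z => σ z * g z) := hmono σ hσcont hσ01
  have hint2 : Integrable (fun z => σ (-z) * g z) :=
    hmono _ (hσcont.comp continuous_neg) fun x => hσ01 (-x)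
  have hneg : ∫ z : ℝ, σ (-z) * g z = ∫ z : ℝ, σ z * g z := by
    have hge : ∀ z, g (-z) = g z := by intro z; simp [hg]
    calc ∫ z : ℝ, σ (-z) * g z = ∫ z : ℝ, σ (-z) * g (-z) := by simp_rw [hge]
    _ = ∫ z : ℝ, σ z * g z := integral_neg_eq_self (fun z => σ z * g z) volume
  have hsum : ∀ z : ℝ, σ z * g z + σ (-z) * g z = g z := by
    intro z
    have : σ z + σ (-z) = 1 := by
      rw [hσ, hσ, neg_neg]
      have h1 : (0:ℝ) < 1 + Real.exp (-z) := by positivity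
      have h2 : (0:ℝ) < 1 + Real.exp z := by positivity
      have he : Real.exp (-z) * Real.exp z = 1 := by
        rw [← Real.exp_add]; simp
      field_simp
      nlinarith
    calc σ z * g z + σ (-z) * g z = (σ z + σ (-z)) * g z := by ring
    _ = g z := by rw [this, one_mul]
  have htot : ∫ z : ℝ, g z = 1 := by
    simp only [hg, hexp]
    rw [integral_const_mul, integral_gaussian]
    rw [inv_mul_eq_iff_eq_mul₀ (by positivity), mul_one]
    rw [← Real.sqrt_inv] at *
    congr 1
    field_simp
  have : (∫ z : ℝ, σ z * g z) + (∫ z : ℝ, σ (-z) * g z) = 1 := by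
    rw [← integral_add hint1 hint2]
    simp_rw [hsum, htot]
  rw [hneg] at this
  linarith

/-- For a centred bivariate Gaussian `(X,Y)` with common variance `κ₀` and covariance
`κ₁`, `0 ≤ κ₁ < κ₀`, expressed via its explicit joint density, one has
`E[σ(X)σ(Y)] ≤ ((κ₀+κ₁)/(κ₀-κ₁))^(1/2) E[σ(Z)]²` with `Z ~ N(0,κ₀)`. -/
theorem sigmoid_product_gaussian_bound
    (σ : ℝ → ℝ) (hσ : ∀ x, σ x = (1 + Real.exp (-x))⁻¹)
    (κ₀ κ₁ : ℝ) (hκ₁ : 0 ≤ κ₁) (hκ : κ₁ < κ₀)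
    (f : ℝ → ℝ → ℝ)
    (hf : ∀ x y, f x y = (2 * π * Real.sqrt (κ₀ ^ 2 - κ₁ ^ 2))⁻¹ *
      Real.exp (-((κ₀ * (x ^ 2 + y ^ 2) - 2 * κ₁ * x * y) / (2 * (κ₀ ^ 2 - κ₁ ^ 2)))))
    (φ : ℝ → ℝ)
    (hφ : ∀ z, φ z = (Real.sqrt (2 * π * κ₀))⁻¹ * Real.exp (-(z ^ 2 / (2 * κ₀)))) :
    ∫ x : ℝ, ∫ y : ℝ, σ x * σ y * f x y ≤
      ((κ₀ + κ₁) / (κ₀ - κ₁)) ^ ((1:ℝ)/2) * (∫ z : ℝ, σ z * φ z) ^ 2 := by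
  have hκ₀ : 0 < κ₀ := lt_of_le_of_lt hκ₁ hκ
  have hsub : 0 < κ₀ - κ₁ := by linarith
  have hadd : 0 < κ₀ + κ₁ := by linarith
  have hsq : 0 < κ₀ ^ 2 - κ₁ ^ 2 := by nlinarith
  set v := κ₀ + κ₁ with hvdef
  set C := Real.sqrt ((κ₀ + κ₁) / (κ₀ - κ₁)) with hC
  have hC0 : 0 < C := Real.sqrt_pos.mpr (by positivity)
  set g : ℝ → ℝ := fun z => (Real.sqrt (2 * π * v))⁻¹ * Real.exp (-(z ^ 2 / (2 * v))) with hg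
  have hg0 : ∀ z, 0 ≤ g z := by intro z; rw [hg]; positivity
  have hσ01 : ∀ x, 0 ≤ σ x ∧ σ x ≤ 1 := by
    intro x
    rw [hσ]
    constructor
    · positivity
    · rw [inv_le_one_iff₀]; right; nlinarith [Real.exp_pos (-x)]
  have hhalfg : ∫ z : ℝ, σ z * g z = 1/2 := sigmoid_half_integral σ hσ v (by positivity)
  have hhalfφ : ∫ z : ℝ, σ z * φ z = 1/2 := by
    simp_rw [hφ]
    exact sigmoid_half_integral σ hσ κ₀ hκ₀
  have hb : 0 < (2*v)⁻¹ := by positivity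
  have hexp : ∀ z : ℝ, Real.exp (-(z ^ 2 / (2 * v))) = Real.exp (-(2*v)⁻¹ * z ^ 2) := by
    intro z; congr 1; field_simp
  have hgint : Integrable g := by
    simp only [hg, hexp]
    exact (integrable_exp_neg_mul_sq hb).const_mul _
  have hσcont : Continuous σ := by
    have : Continuous fun x : ℝ => (1 + Real.exp (-x))⁻¹ := by
      apply Continuous.inv₀ (by continuity)
      intro x; positivity
    simpa [funext hσ] using this
  have hgcont : Continuous g := by rw [hg]; exact continuous_const.mul (by continuity)
  have hint1 : Integrable (fun z => σ z * g z) := by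
    apply hgint.mono ((hσcont.mul hgcont).aestronglyMeasurable)
    filter_upwards with z
    rw [Real.norm_eq_abs, Real.norm_eq_abs, abs_of_nonneg (hg0 z), Pi.mul_apply,
      abs_of_nonneg (mul_nonneg (hσ01 z).1 (hg0 z))]
    nlinarith [(hσ01 z).1, (hσ01 z).2, hg0 z]
  -- key constant identity
  have key : C * Real.sqrt (κ₀ ^ 2 - κ₁ ^ 2) = v := by
    rw [hC, ← Real.sqrt_mul (by positivity)]
    have : (κ₀ + κ₁) / (κ₀ - κ₁) * (κ₀ ^ 2 - κ₁ ^ 2) = v ^ 2 := by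
      rw [hvdef]; field_simp; ring
    rw [this, Real.sqrt_sq hadd.le]
  have hconst : (2 * π * Real.sqrt (κ₀ ^ 2 - κ₁ ^ 2))⁻¹ =
      C * ((Real.sqrt (2 * π * v))⁻¹ * (Real.sqrt (2 * π * v))⁻¹) := by
    rw [← mul_inv, Real.mul_self_sqrt (by positivity), ← key]
    have hs : 0 < Real.sqrt (κ₀ ^ 2 - κ₁ ^ 2) := Real.sqrt_pos.mpr hsq
    have hπ : (0:ℝ) < π := pi_pos
    field_simp
  -- pointwise density bound
  have hfbound : ∀ x y : ℝ, f x y ≤ C * (g x * g y) := by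
    intro x y
    rw [hf]
    simp only [hg]
    have hA : Real.exp (-((κ₀ * (x ^ 2 + y ^ 2) - 2 * κ₁ * x * y) / (2 * (κ₀ ^ 2 - κ₁ ^ 2)))) ≤
        Real.exp (-(x ^ 2 / (2 * v))) * Real.exp (-(y ^ 2 / (2 * v))) := by
      rw [← Real.exp_add, Real.exp_le_exp]
      have h1 : -(x ^ 2 / (2 * v)) + -(y ^ 2 / (2 * v)) = -((x ^ 2 + y ^ 2) / (2 * v)) := by
        ring
      rw [h1, neg_le_neg_iff]
      rw [div_le_div_iff₀ (by positivity) (by positivity)]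
      rw [hvdef]
      nlinarith [mul_nonneg (mul_nonneg hκ₁ hadd.le) (sq_nonneg (x - y))]
    calc (2 * π * Real.sqrt (κ₀ ^ 2 - κ₁ ^ 2))⁻¹ *
          Real.exp (-((κ₀ * (x ^ 2 + y ^ 2) - 2 * κ₁ * x * y) / (2 * (κ₀ ^ 2 - κ₁ ^ 2))))
        ≤ (2 * π * Real.sqrt (κ₀ ^ 2 - κ₁ ^ 2))⁻¹ *
          (Real.exp (-(x ^ 2 / (2 * v))) * Real.exp (-(y ^ 2 / (2 * v)))) := by
          apply mul_le_mul_of_nonneg_left hA (by positivity)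
    _ = C * ((Real.sqrt (2 * π * v))⁻¹ * Real.exp (-(x ^ 2 / (2 * v))) *
          ((Real.sqrt (2 * π * v))⁻¹ * Real.exp (-(y ^ 2 / (2 * v))))) := by
          rw [hconst]; ring
  -- inner integral bound
  have hinner : ∀ x : ℝ, ∫ y : ℝ, σ x * σ y * f x y ≤ C * σ x * g x * (1/2) := by
    intro x
    have hstep : ∫ y : ℝ, σ x * σ y * f x y ≤ ∫ y : ℝ, (C * σ x * g x) * (σ y * g y) := by
      apply integral_mono_of_nonneg
      · filter_upwards with y
        have hfpos : 0 ≤ f x y := by rw [hf]; positivity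
        exact mul_nonneg (mul_nonneg (hσ01 x).1 (hσ01 y).1) hfpos
      · exact hint1.const_mul _
      · filter_upwards with y
        calc σ x * σ y * f x y ≤ σ x * σ y * (C * (g x * g y)) :=
              mul_le_mul_of_nonneg_left (hfbound x y) (mul_nonneg (hσ01 x).1 (hσ01 y).1)
        _ = (C * σ x * g x) * (σ y * g y) := by ring
    rwa [integral_const_mul, hhalfg] at hstep
  -- outer integral bound
  have houter : ∫ x : ℝ, ∫ y : ℝ, σ x * σ y * f x y ≤ ∫ x : ℝ, C * σ x * g x * (1/2) := by
    apply integral_mono_of_nonneg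
    · filter_upwards with x
      apply integral_nonneg
      intro y
      have hfpos : 0 ≤ f x y := by rw [hf]; positivity
      exact mul_nonneg (mul_nonneg (hσ01 x).1 (hσ01 y).1) hfpos
    · have e : (fun x => C * σ x * g x * (1/2)) = fun x => (C * (1/2)) * (σ x * g x) :=
        funext fun x => by ring
      rw [e]; exact hint1.const_mul _
    · filter_upwards with x using hinner x
  have hval : ∫ x : ℝ, C * σ x * g x * (1/2) = C * (1/2) ^ 2 := by
    have e : (fun x => C * σ x * g x * (1/2)) = fun x => (C * (1/2)) * (σ x * g x) :=
      funext fun x => by ring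
    rw [e, integral_const_mul, hhalfg]; ring
  rw [hhalfφ, ← Real.sqrt_eq_rpow, ← hC]
  rw [hval] at houter
  exact houter
end

section
/- Let (X,Y) be a centred bivariate Gaussian vector with Var(X) = Var(Y) = κ(0) and Cov(X,Y) = κ(d) for some d with 0 ≤ κ(d) ≤ κ(1) < κ(0). Then Cov(σ(X), σ(Y)) ≤ 2 κ(d) E[σ(X)]² / (κ(0) - κ(1)). -/
open MeasureTheory Real

private lemma sigmoid_props (σ : ℝ → ℝ) (hσ : ∀ x, σ x = (1 + Real.exp (-x))⁻¹) :
    Continuous σ ∧ (∀ x, 0 ≤ σ x) ∧ (∀ x, σ x ≤ 1) ∧ (∀ x, σ (-x) = 1 - σ x) := by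
  have hpos : ∀ x : ℝ, 0 < 1 + Real.exp (-x) := fun x => by positivity
  refine ⟨?_, fun x => ?_, fun x => ?_, fun x => ?_⟩
  · have : Continuous fun x : ℝ => (1 + Real.exp (-x))⁻¹ :=
      Continuous.inv₀ (by continuity) (fun x => (hpos x).ne')
    simpa [funext hσ] using this
  · rw [hσ]; positivity
  · rw [hσ]
    rw [inv_le_one_iff₀]
    right
    nlinarith [Real.exp_pos (-x)]
  · rw [hσ, hσ, neg_neg]
    have h1 := hpos x
    have h2 := hpos (-x)
    rw [neg_neg] at h2
    have hm : Real.exp (-x) * Real.exp x = 1 := by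
      rw [← Real.exp_add]; simp
    field_simp
    nlinarith [hm]

private lemma gauss_integrable (s : ℝ) (hs : 0 < s) :
    Integrable (fun x : ℝ => Real.exp (-(x ^ 2 / (2 * s)))) := by
  have h : (fun x : ℝ => Real.exp (-(x ^ 2 / (2 * s)))) =
      fun x : ℝ => Real.exp (-(1 / (2 * s)) * x ^ 2) := by
    funext x; ring_nf
  rw [h]
  exact integrable_exp_neg_mul_sq (by positivity)

private lemma gauss_integral (s : ℝ) (hs : 0 < s) :
    (∫ x : ℝ, Real.exp (-(x ^ 2 / (2 * s)))) = Real.sqrt (2 * π * s) := by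
  have h : (fun x : ℝ => Real.exp (-(x ^ 2 / (2 * s)))) =
      fun x : ℝ => Real.exp (-(1 / (2 * s)) * x ^ 2) := by
    funext x; ring_nf
  rw [h, integral_gaussian]
  congr 1
  field_simp

private lemma sigmoid_gauss_integrable (σ : ℝ → ℝ)
    (hσ : ∀ x, σ x = (1 + Real.exp (-x))⁻¹) (s : ℝ) (hs : 0 < s) :
    Integrable (fun x : ℝ => σ x * Real.exp (-(x ^ 2 / (2 * s)))) := by
  obtain ⟨hc, h0, h1, -⟩ := sigmoid_props σ hσ
  exact (gauss_integrable s hs).bdd_mul hc.aestronglyMeasurable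
    (Filter.Eventually.of_forall fun x => by rw [Real.norm_eq_abs, abs_of_nonneg (h0 x)]; exact h1 x)

private lemma sigmoid_gauss_integral (σ : ℝ → ℝ)
    (hσ : ∀ x, σ x = (1 + Real.exp (-x))⁻¹) (s : ℝ) (hs : 0 < s) :
    (∫ x : ℝ, σ x * Real.exp (-(x ^ 2 / (2 * s)))) = Real.sqrt (2 * π * s) / 2 := by
  obtain ⟨hc, h0, h1, hneg⟩ := sigmoid_props σ hσ
  have hI := sigmoid_gauss_integrable σ hσ s hs
  have hG := gauss_integrable s hs
  have key : (∫ x : ℝ, σ x * Real.exp (-(x ^ 2 / (2 * s)))) =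
      (∫ x : ℝ, Real.exp (-(x ^ 2 / (2 * s)))) -
      (∫ x : ℝ, σ x * Real.exp (-(x ^ 2 / (2 * s)))) := by
    conv_lhs => rw [← integral_neg_eq_self (fun x : ℝ => σ x * Real.exp (-(x ^ 2 / (2 * s)))) volume]
    have : (fun x : ℝ => σ (-x) * Real.exp (-((-x) ^ 2 / (2 * s)))) =
        fun x : ℝ => Real.exp (-(x ^ 2 / (2 * s))) - σ x * Real.exp (-(x ^ 2 / (2 * s))) := by
      funext x
      rw [hneg x]
      ring_nf
    rw [this, integral_sub hG hI]
  have := gauss_integral s hs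
  linarith [key, this]

/-- Lemma 1 of the paper: for a centred bivariate Gaussian `(X,Y)` with common variance
`κ0` and covariance `κd`, `0 ≤ κd ≤ κ1 < κ0`, expressed via its explicit joint density,
`Cov(σ(X),σ(Y)) ≤ 2 κd E[σ(X)]² / (κ0 - κ1)`. -/
theorem sigmoid_covariance_gaussian_bound
    (σ : ℝ → ℝ) (hσ : ∀ x, σ x = (1 + Real.exp (-x))⁻¹)
    (κ0 κ1 κd : ℝ) (hκd0 : 0 ≤ κd) (hκd1 : κd ≤ κ1) (hκ10 : κ1 < κ0)
    (f : ℝ → ℝ → ℝ)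
    (hf : ∀ x y, f x y = (2 * π * Real.sqrt (κ0 ^ 2 - κd ^ 2))⁻¹ *
      Real.exp (-((κ0 * (x ^ 2 + y ^ 2) - 2 * κd * x * y) / (2 * (κ0 ^ 2 - κd ^ 2)))))
    (φ : ℝ → ℝ)
    (hφ : ∀ z, φ z = (Real.sqrt (2 * π * κ0))⁻¹ * Real.exp (-(z ^ 2 / (2 * κ0)))) :
    (∫ x : ℝ, ∫ y : ℝ, σ x * σ y * f x y) - (∫ z : ℝ, σ z * φ z) ^ 2 ≤
      2 * κd * (∫ z : ℝ, σ z * φ z) ^ 2 / (κ0 - κ1) := by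
  obtain ⟨hc, h0, h1, -⟩ := sigmoid_props σ hσ
  have ha : 0 < κ0 := lt_of_le_of_lt (le_trans hκd0 hκd1) hκ10
  have hac : κd < κ0 := lt_of_le_of_lt hκd1 hκ10
  have hD : 0 < κ0 ^ 2 - κd ^ 2 := by nlinarith
  have hs : 0 < κ0 + κd := by linarith
  set r := Real.sqrt (κ0 ^ 2 - κd ^ 2) with hrdef
  have hr : 0 < r := Real.sqrt_pos.2 hD
  have hr2 : r ^ 2 = κ0 ^ 2 - κd ^ 2 := Real.sq_sqrt hD.le
  -- mean is 1/2
  have hm : (∫ z : ℝ, σ z * φ z) = 1 / 2 := by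
    have hrw : (fun z : ℝ => σ z * φ z) = fun z : ℝ =>
        (Real.sqrt (2 * π * κ0))⁻¹ * (σ z * Real.exp (-(z ^ 2 / (2 * κ0)))) := by
      funext z; rw [hφ]; ring
    have hsp : 0 < Real.sqrt (2 * π * κ0) := Real.sqrt_pos.2 (by positivity)
    rw [hrw, integral_const_mul, sigmoid_gauss_integral σ hσ κ0 ha]
    field_simp
  -- the dominating function
  set g : ℝ → ℝ := fun x => σ x * Real.exp (-(x ^ 2 / (2 * (κ0 + κd)))) with hgdef
  have hgint : Integrable g := sigmoid_gauss_integrable σ hσ _ hs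
  have hgnn : ∀ x, 0 ≤ g x := fun x => mul_nonneg (h0 x) (Real.exp_nonneg _)
  have hgI : (∫ x : ℝ, g x) = Real.sqrt (2 * π * (κ0 + κd)) / 2 :=
    sigmoid_gauss_integral σ hσ _ hs
  set C0 : ℝ := (2 * π * r)⁻¹ with hC0def
  have hC0 : 0 < C0 := by positivity
  have hfnn : ∀ x y, 0 ≤ f x y := fun x y => by rw [hf]; positivity
  -- pointwise bound
  have hpt : ∀ x y, σ x * σ y * f x y ≤ C0 * (g x * g y) := by
    intro x y
    have hE : -((κ0 * (x ^ 2 + y ^ 2) - 2 * κd * x * y) / (2 * (κ0 ^ 2 - κd ^ 2))) ≤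
        -(x ^ 2 / (2 * (κ0 + κd))) + -(y ^ 2 / (2 * (κ0 + κd))) := by
      have hx2 : (κ0 - κd) * (x ^ 2 + y ^ 2) ≤ κ0 * (x ^ 2 + y ^ 2) - 2 * κd * x * y := by
        nlinarith [sq_nonneg (x - y)]
      have heq : -(x ^ 2 / (2 * (κ0 + κd))) + -(y ^ 2 / (2 * (κ0 + κd))) =
          -(((κ0 - κd) * (x ^ 2 + y ^ 2)) / (2 * (κ0 ^ 2 - κd ^ 2))) := by
        have hne1 : (κ0 + κd) ≠ 0 := hs.ne'
        have hne2 : (κ0 ^ 2 - κd ^ 2) ≠ 0 := hD.ne'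
        field_simp
        ring
      rw [heq]
      apply neg_le_neg
      gcongr
    calc σ x * σ y * f x y = C0 * (σ x * σ y *
          Real.exp (-((κ0 * (x ^ 2 + y ^ 2) - 2 * κd * x * y) / (2 * (κ0 ^ 2 - κd ^ 2))))) := by
            rw [hf]; ring
      _ ≤ C0 * (σ x * σ y *
          Real.exp (-(x ^ 2 / (2 * (κ0 + κd))) + -(y ^ 2 / (2 * (κ0 + κd))))) := by
            refine mul_le_mul_of_nonneg_left ?_ hC0.le
            exact mul_le_mul_of_nonneg_left (Real.exp_le_exp.2 hE)
              (mul_nonneg (h0 x) (h0 y))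
      _ = C0 * (g x * g y) := by rw [Real.exp_add]; simp only [hgdef]; ring
  -- inner integral bound
  have hinner : ∀ x, (∫ y : ℝ, σ x * σ y * f x y) ≤ C0 * g x * (∫ y : ℝ, g y) := by
    intro x
    have hle : (∫ y : ℝ, σ x * σ y * f x y) ≤ ∫ y : ℝ, C0 * g x * g y := by
      apply integral_mono_of_nonneg
      · exact Filter.Eventually.of_forall fun y =>
          mul_nonneg (mul_nonneg (h0 x) (h0 y)) (hfnn x y)
      · exact hgint.const_mul _
      · exact Filter.Eventually.of_forall fun y =>
          (hpt x y).trans_eq (mul_assoc _ _ _).symm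
    rwa [integral_const_mul] at hle
  -- outer integral bound
  have houter : (∫ x : ℝ, ∫ y : ℝ, σ x * σ y * f x y) ≤
      C0 * (∫ x : ℝ, g x) * (∫ x : ℝ, g x) := by
    have hle : (∫ x : ℝ, ∫ y : ℝ, σ x * σ y * f x y) ≤
        ∫ x : ℝ, C0 * (∫ y : ℝ, g y) * g x := by
      apply integral_mono_of_nonneg
      · exact Filter.Eventually.of_forall fun x =>
          integral_nonneg fun y => mul_nonneg (mul_nonneg (h0 x) (h0 y)) (hfnn x y)
      · exact hgint.const_mul _
      · exact Filter.Eventually.of_forall fun x =>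
          (hinner x).trans_eq (by ring)
    rw [integral_const_mul] at hle
    linarith [hle]
  -- compute the bound
  have hIsq : (∫ x : ℝ, g x) * (∫ x : ℝ, g x) = 2 * π * (κ0 + κd) / 4 := by
    rw [hgI, div_mul_div_comm, Real.mul_self_sqrt (by positivity)]
    norm_num
  have hub : (∫ x : ℝ, ∫ y : ℝ, σ x * σ y * f x y) ≤ (κ0 + κd) / (4 * r) := by
    calc (∫ x : ℝ, ∫ y : ℝ, σ x * σ y * f x y) ≤ C0 * (∫ x : ℝ, g x) * (∫ x : ℝ, g x) := houter
      _ = C0 * ((∫ x : ℝ, g x) * (∫ x : ℝ, g x)) := by ring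
      _ = (2 * π * r)⁻¹ * (2 * π * (κ0 + κd) / 4) := by rw [hIsq]
      _ = (κ0 + κd) / (4 * r) := by
          have hπ : (π : ℝ) ≠ 0 := Real.pi_ne_zero
          field_simp
  have ht : 0 < κ0 - κ1 := by linarith
  have hrge : κ0 - κd ≤ r := by nlinarith [hr2, hr]
  have hq : (κ0 + κd) * (κ0 - κ1) ≤ r * (κ0 - κ1) + 2 * κd * r := by
    nlinarith [hrge, mul_nonneg hκd0 (sub_nonneg.2 hκd1), mul_nonneg hκd0 ht.le]
  have key : (κ0 + κd) / (4 * r) ≤ 1 / 4 + κd / (2 * (κ0 - κ1)) := by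
    have heq2 : 1 / 4 + κd / (2 * (κ0 - κ1)) - (κ0 + κd) / (4 * r) =
        (r * (κ0 - κ1) + 2 * κd * r - (κ0 + κd) * (κ0 - κ1)) / (4 * r * (κ0 - κ1)) := by
      field_simp
      ring
    have hnn : 0 ≤ (r * (κ0 - κ1) + 2 * κd * r - (κ0 + κd) * (κ0 - κ1)) / (4 * r * (κ0 - κ1)) :=
      div_nonneg (by linarith) (by positivity)
    linarith
  rw [hm]
  have hRHS : 2 * κd * ((1:ℝ) / 2) ^ 2 / (κ0 - κ1) = κd / (2 * (κ0 - κ1)) := by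
    rw [show (2:ℝ) * κd * ((1:ℝ) / 2) ^ 2 = κd / 2 by ring, div_div]
  rw [hRHS]
  have : ((1:ℝ) / 2) ^ 2 = 1 / 4 := by norm_num
  rw [this]
  linarith
end
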